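/- Let G be a Hermitian matrix and let P(G) denote the matrix obtained by replacing each negative eigenvalue of G with 0 in its spectral decomposition. Then P(G) is the Frobenius-nearest positive semidefinite matrix to G: for every PSD matrix H, ‖G - P(G)‖_F ≤ ‖G - H‖_F. -/

import Mathlib

set_option linter.unusedSectionVars false

open Matrix ComplexOrder

section Aux
variable {n : Type*} [Fintype n] [DecidableEq n]

lemma frob_eq_trace (M : Matrix n n ℂ) :
    ∑ i, ∑ j, ‖M i j‖ ^ 2 = (Matrix.trace (Mᴴ * M)).re := by
  rw [Matrix.trace, Complex.re_sum, Finset.sum_comm]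
  refine Finset.sum_congr rfl fun j _ => ?_
  rw [Matrix.diag, Matrix.mul_apply, Complex.re_sum]
  refine Finset.sum_congr rfl fun i _ => ?_
  rw [Matrix.conjTranspose_apply, Complex.star_def, RCLike.conj_mul]
  norm_cast

lemma frob_conj (V M : Matrix n n ℂ) (hV : V ∈ Matrix.unitaryGroup n ℂ) :
    ∑ i, ∑ j, ‖(V * M * star V) i j‖ ^ 2 = ∑ i, ∑ j, ‖M i j‖ ^ 2 := by
  rw [frob_eq_trace, frob_eq_trace]
  congr 1
  have h1 : Vᴴ * V = 1 := Matrix.mem_unitaryGroup_iff'.mp hV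
  have h2 : V * Vᴴ = 1 := Matrix.mem_unitaryGroup_iff.mp hV
  have key : (V * M * star V)ᴴ * (V * M * star V) = V * (Mᴴ * M) * star V := by
    have e1 : (V * M * star V)ᴴ * (V * M * star V) = V * Mᴴ * ((Vᴴ * V) * (M * Vᴴ)) := by
      simp only [Matrix.star_eq_conjTranspose, Matrix.conjTranspose_mul,
        Matrix.conjTranspose_conjTranspose, Matrix.mul_assoc]
    rw [e1, h1, Matrix.one_mul]
    simp only [Matrix.star_eq_conjTranspose, Matrix.mul_assoc]
  rw [key, Matrix.star_eq_conjTranspose, Matrix.trace_mul_cycle, ← Matrix.mul_assoc, h1,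
    Matrix.one_mul]

lemma frob_diag (d : n → ℂ) :
    ∑ i, ∑ j, ‖Matrix.diagonal d i j‖ ^ 2 = ∑ i, ‖d i‖ ^ 2 := by
  refine Finset.sum_congr rfl fun i _ => ?_
  rw [Finset.sum_eq_single i]
  · simp
  · intro j _ hj; simp [Matrix.diagonal_apply_ne d (Ne.symm hj)]
  · simp

end Aux

/-- The PSD part `P(G) = V diag(max(λᵢ,0)) V*` of a Hermitian matrix `G` is
the Frobenius-nearest PSD matrix to `G`: for every PSD `H`,
`‖G - P(G)‖_F ≤ ‖G - H‖_F` (stated via squared Frobenius norms). -/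
theorem stmt14 {n : Type*} [Fintype n] [DecidableEq n]
    (G : Matrix n n ℂ) (hG : G.IsHermitian)
    (PG : Matrix n n ℂ)
    (hPG : PG = (hG.eigenvectorUnitary : Matrix n n ℂ) *
      Matrix.diagonal (fun i => ((max (hG.eigenvalues i) 0 : ℝ) : ℂ)) *
      star (hG.eigenvectorUnitary : Matrix n n ℂ)) :
    ∀ H : Matrix n n ℂ, H.PosSemidef →
      ∑ i, ∑ j, ‖(G - PG) i j‖ ^ 2 ≤ ∑ i, ∑ j, ‖(G - H) i j‖ ^ 2 := by
  intro H hH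
  set V : Matrix n n ℂ := (hG.eigenvectorUnitary : Matrix n n ℂ) with hV
  have hVmem : V ∈ Matrix.unitaryGroup n ℂ := (hG.eigenvectorUnitary).2
  have h1 : Vᴴ * V = 1 := Matrix.mem_unitaryGroup_iff'.mp hVmem
  have h2 : V * Vᴴ = 1 := Matrix.mem_unitaryGroup_iff.mp hVmem
  set K : Matrix n n ℂ := Vᴴ * H * V with hK
  set D : Matrix n n ℂ := Matrix.diagonal (fun i => ((hG.eigenvalues i : ℝ) : ℂ)) with hD
  have hGPG : G - PG
      = V * Matrix.diagonal (fun i => ((min (hG.eigenvalues i) 0 : ℝ) : ℂ)) * star V := by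
    conv_lhs => rw [hG.spectral_theorem, Unitary.conjStarAlgAut_apply, hPG]
    rw [← Matrix.sub_mul, ← Matrix.mul_sub]
    congr 2
    ext i j
    by_cases hij : i = j
    · subst hij
      simp only [Matrix.sub_apply, Matrix.diagonal_apply_eq, Function.comp_apply]
      rw [show (RCLike.ofReal (hG.eigenvalues i) : ℂ) = ((hG.eigenvalues i : ℝ) : ℂ) from rfl]
      rw [← Complex.ofReal_sub]
      norm_cast
      rcases le_total (hG.eigenvalues i) 0 with h | h <;>
        simp [max_eq_left, max_eq_right, min_eq_left, min_eq_right, h]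
    · simp [Matrix.diagonal_apply_ne _ hij]
  have hGH : G - H = V * (D - K) * star V := by
    rw [Matrix.mul_sub, Matrix.sub_mul]
    congr 1
    · exact hG.spectral_theorem
    · rw [hK, Matrix.star_eq_conjTranspose]
      have e2 : V * (Vᴴ * H * V) * Vᴴ = (V * Vᴴ) * (H * (V * Vᴴ)) := by
        simp only [Matrix.mul_assoc]
      rw [e2, h2, Matrix.one_mul, Matrix.mul_one]
  have hKpsd : K.PosSemidef := hH.conjTranspose_mul_mul_same V
  have hdiag : ∀ i, 0 ≤ (K i i).re ∧ (K i i).im = 0 := by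
    intro i
    have := hKpsd.diag_nonneg (i := i)
    exact ⟨(Complex.le_def.mp this).1, ((Complex.le_def.mp this).2).symm⟩
  rw [hGPG, hGH, frob_conj _ _ hVmem, frob_conj _ _ hVmem, frob_diag]
  have step1 : ∑ i, ‖(D - K) i i‖ ^ 2 ≤ ∑ i, ∑ j, ‖(D - K) i j‖ ^ 2 := by
    refine Finset.sum_le_sum fun i _ => ?_
    exact Finset.single_le_sum (f := fun j => ‖(D - K) i j‖ ^ 2)
      (fun j _ => by positivity) (Finset.mem_univ i)
  refine le_trans ?_ step1
  refine Finset.sum_le_sum fun i _ => ?_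
  obtain ⟨hre, him⟩ := hdiag i
  have hzre : ((D - K) i i).re = hG.eigenvalues i - (K i i).re := by
    simp [hD, Matrix.sub_apply]
  have hzim : ((D - K) i i).im = 0 := by
    simp [hD, Matrix.sub_apply, him]
  have hnorm : ‖(D - K) i i‖ ^ 2 = (hG.eigenvalues i - (K i i).re) ^ 2 := by
    rw [Complex.sq_norm, Complex.normSq_apply, hzre, hzim]
    ring
  have hnorm2 : ‖((min (hG.eigenvalues i) 0 : ℝ) : ℂ)‖ ^ 2 = (min (hG.eigenvalues i) 0) ^ 2 := by
    rw [Complex.norm_real, Real.norm_eq_abs, sq_abs]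
  rw [hnorm, hnorm2]
  rcases le_total (hG.eigenvalues i) 0 with h | h
  · rw [min_eq_left h]; nlinarith
  · rw [min_eq_right h]; nlinarith
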